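/- The spectral radii of the integer matrices F_{5,1,0}, F_{4,1,1}, and F_{3,2,1} are all equal to (7 + 3√5)/2, the larger root of t² − 7t + 1 = 0: in each case this value is a root of the characteristic polynomial and every complex root of the characteristic polynomial has modulus at most (7 + 3√5)/2. -/

import Mathlib

open Matrix

/-- Axis (0 = x, 1 = y, 2 = z) of a basis index `t ≥ 3` (curve classes):
indices `3,…,2+k` are `C_{x,i}`, indices `3+k,…,2+k+l` are `C_{y,i}`,
and the remaining indices are `C_{z,i}`. -/
def axOf (k l : ℕ) (t : ℕ) : ℕ :=
  if t < 3 + k then 0 else if t < 3 + k + l then 1 else 2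

/-- The matrix of `T_x` in the basis
`E_x, E_y, E_z, C_{x,1},…,C_{x,k}, C_{y,1},…,C_{y,l}, C_{z,1},…,C_{z,m}`:
`T_x` fixes `E_y`, `E_z` and each `C_{x,i}`, sends `C_{y,i} ↦ E_z − C_{y,i}`,
`C_{z,i} ↦ E_y − C_{z,i}`, and `E_x ↦ −E_x + 2E_y + 2E_z − (C_{x,1}+…+C_{x,k})`. -/
def Tx (k l m : ℕ) : Matrix (Fin (3 + k + l + m)) (Fin (3 + k + l + m)) ℤ :=
  fun i j =>
    if (j : ℕ) = 0 then
      if (i : ℕ) = 0 then -1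
      else if (i : ℕ) < 3 then 2
      else if axOf k l i = 0 then -1 else 0
    else if (j : ℕ) < 3 then (if i = j then 1 else 0)
    else if axOf k l j = 0 then (if i = j then 1 else 0)
    else if axOf k l j = 1 then (if (i : ℕ) = 2 then 1 else if i = j then -1 else 0)
    else (if (i : ℕ) = 1 then 1 else if i = j then -1 else 0)

/-- The matrix of `T_y`: it fixes `E_x`, `E_z` and each `C_{y,i}`, sends
`C_{x,i} ↦ E_z − C_{x,i}`, `C_{z,i} ↦ E_x − C_{z,i}`, and
`E_y ↦ 2E_x − E_y + 2E_z − (C_{y,1}+…+C_{y,l})`. -/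
def Ty (k l m : ℕ) : Matrix (Fin (3 + k + l + m)) (Fin (3 + k + l + m)) ℤ :=
  fun i j =>
    if (j : ℕ) = 1 then
      if (i : ℕ) = 1 then -1
      else if (i : ℕ) < 3 then 2
      else if axOf k l i = 1 then -1 else 0
    else if (j : ℕ) < 3 then (if i = j then 1 else 0)
    else if axOf k l j = 1 then (if i = j then 1 else 0)
    else if axOf k l j = 0 then (if (i : ℕ) = 2 then 1 else if i = j then -1 else 0)
    else (if (i : ℕ) = 0 then 1 else if i = j then -1 else 0)

/-- The matrix of `T_z`: it fixes `E_x`, `E_y` and each `C_{z,i}`, sends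
`C_{x,i} ↦ E_y − C_{x,i}`, `C_{y,i} ↦ E_x − C_{y,i}`, and
`E_z ↦ 2E_x + 2E_y − E_z − (C_{z,1}+…+C_{z,m})`. -/
def Tz (k l m : ℕ) : Matrix (Fin (3 + k + l + m)) (Fin (3 + k + l + m)) ℤ :=
  fun i j =>
    if (j : ℕ) = 2 then
      if (i : ℕ) = 2 then -1
      else if (i : ℕ) < 3 then 2
      else if axOf k l i = 2 then -1 else 0
    else if (j : ℕ) < 3 then (if i = j then 1 else 0)
    else if axOf k l j = 2 then (if i = j then 1 else 0)
    else if axOf k l j = 0 then (if (i : ℕ) = 1 then 1 else if i = j then -1 else 0)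
    else (if (i : ℕ) = 0 then 1 else if i = j then -1 else 0)

/-- The matrix of `F = T_z ∘ T_y ∘ T_x`. -/
def Fm (k l m : ℕ) : Matrix (Fin (3 + k + l + m)) (Fin (3 + k + l + m)) ℤ :=
  Tz k l m * Ty k l m * Tx k l m

/-- The characteristic polynomial (over `ℂ`) of the integer matrix `F_{k,l,m}`. -/
noncomputable def cpF (k l m : ℕ) : Polynomial ℂ :=
  Matrix.charpoly ((Fm k l m).map (fun x => (x : ℂ)))


open Polynomial in
lemma charpoly_eval {n : ℕ} (A : Matrix (Fin n) (Fin n) ℂ) (z : ℂ) :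
    A.charpoly.eval z = (scalar (Fin n) z - A).det := by
  rw [Matrix.charpoly, eval_det, matPolyEquiv_charmatrix]
  simp

lemma scalar_sub_mulVec {n : ℕ} (A : Matrix (Fin n) (Fin n) ℂ) (z : ℂ) (w : Fin n → ℂ) :
    (scalar (Fin n) z - A).mulVec w = z • w - A.mulVec w := by
  rw [sub_mulVec]
  congr 1
  funext i
  simp [Matrix.scalar_apply, Matrix.mulVec_diagonal]

lemma key (A : Matrix (Fin 9) (Fin 9) ℂ)
    (hann : A^6 + (8:ℂ)•A^4 + (8:ℂ)•A = (8:ℂ)•A^5 + (8:ℂ)•A^2 + 1)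
    (v : Fin 9 → ℂ) (hv : v ≠ 0)
    (hev : A.mulVec v = ((((7 + 3 * Real.sqrt 5) / 2 : ℝ)) : ℂ) • v) :
    A.charpoly.IsRoot (((7 + 3 * Real.sqrt 5) / 2 : ℝ) : ℂ) ∧
      ∀ z : ℂ, A.charpoly.IsRoot z → ‖z‖ ≤ (7 + 3 * Real.sqrt 5) / 2 := by
  have s5 : (0:ℝ) ≤ Real.sqrt 5 := Real.sqrt_nonneg 5
  have hs : ((Real.sqrt 5 : ℝ) : ℂ)^2 = 5 := by
    rw [← Complex.ofReal_pow, Real.sq_sqrt] <;> norm_num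
  constructor
  · show A.charpoly.eval _ = 0
    rw [charpoly_eval]
    refine Matrix.exists_mulVec_eq_zero_iff.mp ⟨v, hv, ?_⟩
    rw [scalar_sub_mulVec, hev, sub_self]
  · intro z hz
    rw [Polynomial.IsRoot, charpoly_eval] at hz
    obtain ⟨w, hw0, hw⟩ := Matrix.exists_mulVec_eq_zero_iff.mpr hz
    rw [scalar_sub_mulVec, sub_eq_zero] at hw
    have hAw : A.mulVec w = z • w := hw.symm
    have hpow : ∀ k : ℕ, (A^k).mulVec w = z^k • w := by
      intro k
      induction k with
      | zero => simp [Matrix.one_mulVec]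
      | succ k ih =>
          rw [pow_succ, ← Matrix.mulVec_mulVec, hAw, Matrix.mulVec_smul, ih,
            smul_smul, pow_succ, mul_comm]
    have h1 := congrArg (fun B : Matrix (Fin 9) (Fin 9) ℂ => B.mulVec w) hann
    simp only [Matrix.add_mulVec, Matrix.smul_mulVec, Matrix.one_mulVec, hpow,
      smul_smul] at h1
    rw [hAw, smul_smul] at h1
    obtain ⟨i, hi⟩ := Function.ne_iff.mp hw0
    have hi' : w i ≠ 0 := by simpa using hi
    have h2 := congrFun h1 i
    simp only [Pi.add_apply, Pi.smul_apply, smul_eq_mul] at h2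
    have h3 : (z^6 - 8*z^5 + 8*z^4 - 8*z^2 + 8*z - 1) * w i = 0 := by
      linear_combination h2
    have hq : z^6 - 8*z^5 + 8*z^4 - 8*z^2 + 8*z - 1 = 0 :=
      (mul_eq_zero.mp h3).resolve_right hi'
    have hfac : (z^2 - 7*z + 1) * ((z - 1) * ((z + 1) * (z^2 - z + 1))) = 0 := by
      linear_combination hq
    have habs : ‖z‖ ≤ (7 + 3 * Real.sqrt 5) / 2 := by
      rcases mul_eq_zero.mp hfac with h | h
      · -- z^2 - 7z + 1 = 0
        have hf2 : (z - (((7 + 3 * Real.sqrt 5) / 2 : ℝ) : ℂ)) *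
            (z - (((7 - 3 * Real.sqrt 5) / 2 : ℝ) : ℂ)) = 0 := by
          push_cast
          linear_combination h - (9/4) * hs
        rcases mul_eq_zero.mp hf2 with h' | h'
        · rw [sub_eq_zero] at h'
          rw [h', Complex.norm_real, Real.norm_eq_abs, abs_of_nonneg (by positivity)]
        · rw [sub_eq_zero] at h'
          rw [h', Complex.norm_real, Real.norm_eq_abs]
          rw [abs_le]
          constructor <;> nlinarith
      rcases mul_eq_zero.mp h with h | h
      · rw [sub_eq_zero] at h
        rw [h]
        simp
        nlinarith
      rcases mul_eq_zero.mp h with h | h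
      · have : z = -1 := by linear_combination h
        rw [this]
        simp
        nlinarith
      · have hz3 : z^3 = -1 := by linear_combination (z + 1) * h
        have : ‖z‖^3 = 1 := by
          rw [← norm_pow, hz3]
          simp
        have ha : ‖z‖ = 1 := by
          nlinarith [norm_nonneg z, sq_nonneg (‖z‖ - 1),
            sq_nonneg (‖z‖ + 1)]
        rw [ha]; nlinarith
    exact habs

noncomputable def vC (a b : Fin 9 → ℤ) : Fin 9 → ℂ :=
  fun i => (a i : ℂ) + (b i : ℂ) * ((Real.sqrt 5 : ℝ) : ℂ)

lemma eig_of_int (M : Matrix (Fin 9) (Fin 9) ℤ) (a b : Fin 9 → ℤ)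
    (h1 : (2:ℤ) • (M.mulVec a) = (7:ℤ) • a + (15:ℤ) • b)
    (h2 : (2:ℤ) • (M.mulVec b) = (3:ℤ) • a + (7:ℤ) • b) :
    (M.map (fun x => (x:ℂ))).mulVec (vC a b)
      = ((((7 + 3 * Real.sqrt 5) / 2 : ℝ)) : ℂ) • vC a b := by
  have hs : ((Real.sqrt 5 : ℝ) : ℂ)^2 = 5 := by
    rw [← Complex.ofReal_pow, Real.sq_sqrt] <;> norm_num
  funext i
  have e1 := congrFun h1 i
  have e2 := congrFun h2 i
  simp only [Pi.smul_apply, Pi.add_apply, smul_eq_mul, Matrix.mulVec, dotProduct] at e1 e2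
  have ce1 : (2:ℂ) * (∑ j, ((M i j : ℂ) * (a j : ℂ))) = 7 * (a i : ℂ) + 15 * (b i : ℂ) := by
    have := congrArg (fun t : ℤ => (t : ℂ)) e1
    push_cast at this
    simpa using this
  have ce2 : (2:ℂ) * (∑ j, ((M i j : ℂ) * (b j : ℂ))) = 3 * (a i : ℂ) + 7 * (b i : ℂ) := by
    have := congrArg (fun t : ℤ => (t : ℂ)) e2
    push_cast at this
    simpa using this
  have lhs : ((M.map (fun x => (x:ℂ))).mulVec (vC a b)) i
      = (∑ j, ((M i j : ℂ) * (a j : ℂ)))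
        + (∑ j, ((M i j : ℂ) * (b j : ℂ))) * ((Real.sqrt 5 : ℝ) : ℂ) := by
    simp only [Matrix.mulVec, dotProduct, Matrix.map_apply, vC]
    rw [Finset.sum_mul, ← Finset.sum_add_distrib]
    apply Finset.sum_congr rfl
    intro j _
    ring
  rw [lhs]
  simp only [Pi.smul_apply, smul_eq_mul, vC]
  push_cast
  linear_combination (1/2) * ce1 + (((Real.sqrt 5 : ℝ) : ℂ)/2) * ce2
    - ((3:ℂ) * (b i) / 2) * hs

def M510 : Matrix (Fin 9) (Fin 9) ℤ := !![3, 5, 2, 2, 2, 2, 2, 2, 1;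
    5, 3, 2, 1, 1, 1, 1, 1, 2;
    -1, -2, -1, -1, -1, -1, -1, -1, -1;
    -1, 0, 0, 1, 0, 0, 0, 0, 0;
    -1, 0, 0, 0, 1, 0, 0, 0, 0;
    -1, 0, 0, 0, 0, 1, 0, 0, 0;
    -1, 0, 0, 0, 0, 0, 1, 0, 0;
    -1, 0, 0, 0, 0, 0, 0, 1, 0;
    2, 1, 0, 0, 0, 0, 0, 0, 1]
def M510b : Matrix (Fin 9) (Fin 9) ℤ := !![24, 27, 14, 11, 11, 11, 11, 11, 12;
    27, 32, 14, 12, 12, 12, 12, 12, 11;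
    -9, -10, -5, -4, -4, -4, -4, -4, -5;
    -4, -5, -2, -1, -2, -2, -2, -2, -1;
    -4, -5, -2, -2, -1, -2, -2, -2, -1;
    -4, -5, -2, -2, -2, -1, -2, -2, -1;
    -4, -5, -2, -2, -2, -2, -1, -2, -1;
    -4, -5, -2, -2, -2, -2, -2, -1, -1;
    13, 14, 6, 5, 5, 5, 5, 5, 5]
def M510d : Matrix (Fin 9) (Fin 9) ℤ := !![1115, 1265, 606, 493, 493, 493, 493, 493, 520;
    1289, 1467, 702, 572, 572, 572, 572, 572, 601;
    -426, -483, -231, -188, -188, -188, -188, -188, -198;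
    -190, -217, -104, -84, -85, -85, -85, -85, -89;
    -190, -217, -104, -85, -84, -85, -85, -85, -89;
    -190, -217, -104, -85, -85, -84, -85, -85, -89;
    -190, -217, -104, -85, -85, -85, -84, -85, -89;
    -190, -217, -104, -85, -85, -85, -85, -84, -89;
    601, 684, 328, 267, 267, 267, 267, 267, 280]
def M510e : Matrix (Fin 9) (Fin 9) ℤ := !![7639, 8678, 4154, 3382, 3382, 3382, 3382, 3382, 3559;
    8842, 10043, 4810, 3915, 3915, 3915, 3915, 3915, 4122;
    -2918, -3315, -1587, -1292, -1292, -1292, -1292, -1292, -1359;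
    -1305, -1482, -710, -577, -578, -578, -578, -578, -609;
    -1305, -1482, -710, -578, -577, -578, -578, -578, -609;
    -1305, -1482, -710, -578, -578, -577, -578, -578, -609;
    -1305, -1482, -710, -578, -578, -578, -577, -578, -609;
    -1305, -1482, -710, -578, -578, -578, -578, -577, -609;
    4120, 4681, 2242, 1825, 1825, 1825, 1825, 1825, 1921]
def M510f : Matrix (Fin 9) (Fin 9) ℤ := !![52361, 59480, 28480, 23184, 23184, 23184, 23184, 23184, 24400;
    60600, 68841, 32960, 26832, 26832, 26832, 26832, 26832, 28240;
    -20000, -22720, -10879, -8856, -8856, -8856, -8856, -8856, -9320;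
    -8944, -10160, -4864, -3959, -3960, -3960, -3960, -3960, -4168;
    -8944, -10160, -4864, -3960, -3959, -3960, -3960, -3960, -4168;
    -8944, -10160, -4864, -3960, -3960, -3959, -3960, -3960, -4168;
    -8944, -10160, -4864, -3960, -3960, -3960, -3959, -3960, -4168;
    -8944, -10160, -4864, -3960, -3960, -3960, -3960, -3959, -4168;
    28240, 32080, 15360, 12504, 12504, 12504, 12504, 12504, 13161]
def a510 : Fin 9 → ℤ := ![-15, 55, 60, -30, -30, -30, -30, -30, 10]
def b510 : Fin 9 → ℤ := ![15, -15, -30, 12, 12, 12, 12, 12, 0]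

lemma hF510 : Fm 5 1 0 = M510 := by decide

lemma hZ510 : (Fm 5 1 0)^6 + (8:ℤ) • (Fm 5 1 0)^4 + (8:ℤ) • (Fm 5 1 0)
    = (8:ℤ) • (Fm 5 1 0)^5 + (8:ℤ) • (Fm 5 1 0)^2 + 1 := by
  rw [hF510]
  have h2 : M510 * M510 = M510b := by decide
  have h4 : M510b * M510b = M510d := by decide
  have h5 : M510d * M510 = M510e := by decide
  have h6 : M510e * M510 = M510f := by decide
  have e2 : M510^2 = M510b := by rw [sq, h2]
  have e4 : M510^4 = M510d := by
    rw [show (4:ℕ) = 2*2 from rfl, pow_mul, e2, sq, h4]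
  have e5 : M510^5 = M510e := by rw [pow_succ, e4, h5]
  have e6 : M510^6 = M510f := by rw [pow_succ, e5, h6]
  rw [e2, e4, e5, e6]
  decide

lemma hannC510 :
    ((Fm 5 1 0).map (fun x => (x:ℂ)))^6 + (8:ℂ) • ((Fm 5 1 0).map (fun x => (x:ℂ)))^4
      + (8:ℂ) • ((Fm 5 1 0).map (fun x => (x:ℂ)))
    = (8:ℂ) • ((Fm 5 1 0).map (fun x => (x:ℂ)))^5
      + (8:ℂ) • ((Fm 5 1 0).map (fun x => (x:ℂ)))^2 + 1 := by
  have hC := congrArg (Int.castRingHom ℂ).mapMatrix hZ510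
  simp only [map_add, map_pow, map_zsmul, _root_.map_one] at hC
  simp only [RingHom.mapMatrix_apply, Int.coe_castRingHom] at hC
  have hconv : ∀ B : Matrix (Fin 9) (Fin 9) ℂ, (8:ℤ) • B = (8:ℂ) • B := by
    intro B
    rw [← Int.cast_smul_eq_zsmul ℂ]
    norm_num
  simp only [hconv] at hC
  convert hC using 2

lemma hev510 : ((Fm 5 1 0).map (fun x => (x:ℂ))).mulVec (vC a510 b510)
    = ((((7 + 3 * Real.sqrt 5) / 2 : ℝ)) : ℂ) • vC a510 b510 := by
  rw [hF510]
  apply eig_of_int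
  · decide
  · decide

lemma hvne510 : vC a510 b510 ≠ 0 := by
  intro h
  have h8 := congrFun h 8
  have ha : a510 8 = 10 := by decide
  have hb : b510 8 = 0 := by decide
  rw [vC] at h8
  simp [ha, hb] at h8

def M411 : Matrix (Fin 9) (Fin 9) ℤ := !![5, 5, 2, 2, 2, 2, 2, 1, 4;
    6, 3, 2, 1, 1, 1, 1, 2, 3;
    -2, -2, -1, -1, -1, -1, -1, -1, -2;
    -1, 0, 0, 1, 0, 0, 0, 0, 0;
    -1, 0, 0, 0, 1, 0, 0, 0, 0;
    -1, 0, 0, 0, 0, 1, 0, 0, 0;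
    -1, 0, 0, 0, 0, 0, 1, 0, 0;
    2, 1, 0, 0, 0, 0, 0, 1, 1;
    -2, -2, -1, -1, -1, -1, -1, -1, -1]
def M411b : Matrix (Fin 9) (Fin 9) ℤ := !![37, 29, 14, 11, 11, 11, 11, 10, 28;
    38, 31, 13, 11, 11, 11, 11, 9, 28;
    -14, -11, -5, -4, -4, -4, -4, -4, -11;
    -6, -5, -2, -1, -2, -2, -2, -1, -4;
    -6, -5, -2, -2, -1, -2, -2, -1, -4;
    -6, -5, -2, -2, -2, -1, -2, -1, -4;
    -6, -5, -2, -2, -2, -2, -1, -1, -4;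
    16, 12, 5, 4, 4, 4, 4, 4, 11;
    -16, -13, -6, -5, -5, -5, -5, -5, -12]
def M411d : Matrix (Fin 9) (Fin 9) ℤ := !![1723, 1354, 619, 493, 493, 493, 493, 431, 1292;
    1834, 1444, 659, 526, 526, 526, 526, 459, 1376;
    -658, -517, -236, -188, -188, -188, -188, -164, -493;
    -294, -232, -106, -84, -85, -85, -85, -74, -221;
    -294, -232, -106, -85, -84, -85, -85, -74, -221;
    -294, -232, -106, -85, -85, -84, -85, -74, -221;
    -294, -232, -106, -85, -85, -85, -84, -74, -221;
    770, 606, 277, 221, 221, 221, 221, 193, 577;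
    -770, -605, -276, -220, -220, -220, -220, -193, -577]
def M411e : Matrix (Fin 9) (Fin 9) ℤ := !![11807, 9286, 4243, 3382, 3382, 3382, 3382, 2951, 8855;
    12578, 9891, 4521, 3603, 3603, 3603, 3603, 3146, 9433;
    -4510, -3547, -1621, -1292, -1292, -1292, -1292, -1127, -3382;
    -2017, -1586, -725, -577, -578, -578, -578, -505, -1513;
    -2017, -1586, -725, -578, -577, -578, -578, -505, -1513;
    -2017, -1586, -725, -578, -578, -577, -578, -505, -1513;
    -2017, -1586, -725, -578, -578, -578, -577, -505, -1513;
    5280, 4153, 1898, 1513, 1513, 1513, 1513, 1321, 3960;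
    -5280, -4152, -1897, -1512, -1512, -1512, -1512, -1320, -3959]
def M411f : Matrix (Fin 9) (Fin 9) ℤ := !![80929, 63648, 29088, 23184, 23184, 23184, 23184, 20232, 60696;
    86208, 67801, 30984, 24696, 24696, 24696, 24696, 21552, 64656;
    -30912, -24312, -11111, -8856, -8856, -8856, -8856, -7728, -23184;
    -13824, -10872, -4968, -3959, -3960, -3960, -3960, -3456, -10368;
    -13824, -10872, -4968, -3960, -3959, -3960, -3960, -3456, -10368;
    -13824, -10872, -4968, -3960, -3960, -3959, -3960, -3456, -10368;
    -13824, -10872, -4968, -3960, -3960, -3960, -3959, -3456, -10368;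
    36192, 28464, 13008, 10368, 10368, 10368, 10368, 9049, 27144;
    -36192, -28464, -13008, -10368, -10368, -10368, -10368, -9048, -27143]
def a411 : Fin 9 → ℤ := ![0, -7, -5, 3, 3, 3, 3, -2, 2]
def b411 : Fin 9 → ℤ := ![-2, 1, 3, -1, -1, -1, -1, 0, 0]

lemma hF411 : Fm 4 1 1 = M411 := by decide

lemma hZ411 : (Fm 4 1 1)^6 + (8:ℤ) • (Fm 4 1 1)^4 + (8:ℤ) • (Fm 4 1 1)
    = (8:ℤ) • (Fm 4 1 1)^5 + (8:ℤ) • (Fm 4 1 1)^2 + 1 := by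
  rw [hF411]
  have h2 : M411 * M411 = M411b := by decide
  have h4 : M411b * M411b = M411d := by decide
  have h5 : M411d * M411 = M411e := by decide
  have h6 : M411e * M411 = M411f := by decide
  have e2 : M411^2 = M411b := by rw [sq, h2]
  have e4 : M411^4 = M411d := by
    rw [show (4:ℕ) = 2*2 from rfl, pow_mul, e2, sq, h4]
  have e5 : M411^5 = M411e := by rw [pow_succ, e4, h5]
  have e6 : M411^6 = M411f := by rw [pow_succ, e5, h6]
  rw [e2, e4, e5, e6]
  decide

lemma hannC411 :
    ((Fm 4 1 1).map (fun x => (x:ℂ)))^6 + (8:ℂ) • ((Fm 4 1 1).map (fun x => (x:ℂ)))^4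
      + (8:ℂ) • ((Fm 4 1 1).map (fun x => (x:ℂ)))
    = (8:ℂ) • ((Fm 4 1 1).map (fun x => (x:ℂ)))^5
      + (8:ℂ) • ((Fm 4 1 1).map (fun x => (x:ℂ)))^2 + 1 := by
  have hC := congrArg (Int.castRingHom ℂ).mapMatrix hZ411
  simp only [map_add, map_pow, map_zsmul, _root_.map_one] at hC
  simp only [RingHom.mapMatrix_apply, Int.coe_castRingHom] at hC
  have hconv : ∀ B : Matrix (Fin 9) (Fin 9) ℂ, (8:ℤ) • B = (8:ℂ) • B := by
    intro B
    rw [← Int.cast_smul_eq_zsmul ℂ]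
    norm_num
  simp only [hconv] at hC
  convert hC using 2

lemma hev411 : ((Fm 4 1 1).map (fun x => (x:ℂ))).mulVec (vC a411 b411)
    = ((((7 + 3 * Real.sqrt 5) / 2 : ℝ)) : ℂ) • vC a411 b411 := by
  rw [hF411]
  apply eig_of_int
  · decide
  · decide

lemma hvne411 : vC a411 b411 ≠ 0 := by
  intro h
  have h8 := congrFun h 8
  have ha : a411 8 = 2 := by decide
  have hb : b411 8 = 0 := by decide
  rw [vC] at h8
  simp [ha, hb] at h8

def M321 : Matrix (Fin 9) (Fin 9) ℤ := !![5, 4, 2, 2, 2, 2, 1, 1, 3;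
    7, 3, 2, 1, 1, 1, 2, 2, 3;
    -3, -2, -1, -1, -1, -1, -1, -1, -2;
    -1, 0, 0, 1, 0, 0, 0, 0, 0;
    -1, 0, 0, 0, 1, 0, 0, 0, 0;
    -1, 0, 0, 0, 0, 1, 0, 0, 0;
    2, 1, 0, 0, 0, 0, 1, 0, 1;
    2, 1, 0, 0, 0, 0, 0, 1, 1;
    -3, -2, -1, -1, -1, -1, -1, -1, -1]
def M321b : Matrix (Fin 9) (Fin 9) ℤ := !![36, 24, 13, 11, 11, 11, 9, 9, 22;
    46, 31, 15, 13, 13, 13, 10, 10, 27;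
    -21, -14, -7, -6, -6, -6, -5, -5, -13;
    -6, -4, -2, -1, -2, -2, -1, -1, -3;
    -6, -4, -2, -2, -1, -2, -1, -1, -3;
    -6, -4, -2, -2, -2, -1, -1, -1, -3;
    16, 10, 5, 4, 4, 4, 4, 3, 9;
    16, 10, 5, 4, 4, 4, 3, 4, 9;
    -24, -16, -8, -7, -7, -7, -6, -6, -14]
def M321d : Matrix (Fin 9) (Fin 9) ℤ := !![1689, 1122, 585, 493, 493, 493, 397, 397, 1026;
    2205, 1467, 764, 645, 645, 645, 518, 518, 1339;
    -993, -660, -344, -290, -290, -290, -233, -233, -603;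
    -288, -192, -100, -84, -85, -85, -68, -68, -175;
    -288, -192, -100, -85, -84, -85, -68, -68, -175;
    -288, -192, -100, -85, -85, -84, -68, -68, -175;
    755, 502, 262, 221, 221, 221, 178, 177, 458;
    755, 502, 262, 221, 221, 221, 177, 178, 458;
    -1162, -772, -402, -339, -339, -339, -273, -273, -705]
def M321e : Matrix (Fin 9) (Fin 9) ℤ := !![11575, 7694, 4011, 3382, 3382, 3382, 2719, 2719, 7031;
    15122, 10051, 5241, 4419, 4419, 4419, 3554, 3554, 9185;
    -6806, -4524, -2359, -1989, -1989, -1989, -1599, -1599, -4134;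
    -1977, -1314, -685, -577, -578, -578, -465, -465, -1201;
    -1977, -1314, -685, -578, -577, -578, -465, -465, -1201;
    -1977, -1314, -685, -578, -578, -577, -465, -465, -1201;
    5176, 3441, 1794, 1513, 1513, 1513, 1217, 1216, 3144;
    5176, 3441, 1794, 1513, 1513, 1513, 1216, 1217, 3144;
    -7968, -5296, -2761, -2328, -2328, -2328, -1872, -1872, -4839]
def M321f : Matrix (Fin 9) (Fin 9) ℤ := !![79337, 52736, 27496, 23184, 23184, 23184, 18640, 18640, 48192;
    103648, 68897, 35920, 30288, 30288, 30288, 24352, 24352, 62960;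
    -46648, -31008, -16167, -13632, -13632, -13632, -10960, -10960, -28336;
    -13552, -9008, -4696, -3959, -3960, -3960, -3184, -3184, -8232;
    -13552, -9008, -4696, -3960, -3959, -3960, -3184, -3184, -8232;
    -13552, -9008, -4696, -3960, -3960, -3959, -3184, -3184, -8232;
    35480, 23584, 12296, 10368, 10368, 10368, 8337, 8336, 21552;
    35480, 23584, 12296, 10368, 10368, 10368, 8336, 8337, 21552;
    -54616, -36304, -18928, -15960, -15960, -15960, -12832, -12832, -33175]
def a321 : Fin 9 → ℤ := ![15, -82, -55, 39, 39, 39, -21, -21, 22]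
def b321 : Fin 9 → ℤ := ![-21, 18, 33, -15, -15, -15, 3, 3, 0]

lemma hF321 : Fm 3 2 1 = M321 := by decide

lemma hZ321 : (Fm 3 2 1)^6 + (8:ℤ) • (Fm 3 2 1)^4 + (8:ℤ) • (Fm 3 2 1)
    = (8:ℤ) • (Fm 3 2 1)^5 + (8:ℤ) • (Fm 3 2 1)^2 + 1 := by
  rw [hF321]
  have h2 : M321 * M321 = M321b := by decide
  have h4 : M321b * M321b = M321d := by decide
  have h5 : M321d * M321 = M321e := by decide
  have h6 : M321e * M321 = M321f := by decide
  have e2 : M321^2 = M321b := by rw [sq, h2]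
  have e4 : M321^4 = M321d := by
    rw [show (4:ℕ) = 2*2 from rfl, pow_mul, e2, sq, h4]
  have e5 : M321^5 = M321e := by rw [pow_succ, e4, h5]
  have e6 : M321^6 = M321f := by rw [pow_succ, e5, h6]
  rw [e2, e4, e5, e6]
  decide

lemma hannC321 :
    ((Fm 3 2 1).map (fun x => (x:ℂ)))^6 + (8:ℂ) • ((Fm 3 2 1).map (fun x => (x:ℂ)))^4
      + (8:ℂ) • ((Fm 3 2 1).map (fun x => (x:ℂ)))
    = (8:ℂ) • ((Fm 3 2 1).map (fun x => (x:ℂ)))^5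
      + (8:ℂ) • ((Fm 3 2 1).map (fun x => (x:ℂ)))^2 + 1 := by
  have hC := congrArg (Int.castRingHom ℂ).mapMatrix hZ321
  simp only [map_add, map_pow, map_zsmul, _root_.map_one] at hC
  simp only [RingHom.mapMatrix_apply, Int.coe_castRingHom] at hC
  have hconv : ∀ B : Matrix (Fin 9) (Fin 9) ℂ, (8:ℤ) • B = (8:ℂ) • B := by
    intro B
    rw [← Int.cast_smul_eq_zsmul ℂ]
    norm_num
  simp only [hconv] at hC
  convert hC using 2

lemma hev321 : ((Fm 3 2 1).map (fun x => (x:ℂ))).mulVec (vC a321 b321)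
    = ((((7 + 3 * Real.sqrt 5) / 2 : ℝ)) : ℂ) • vC a321 b321 := by
  rw [hF321]
  apply eig_of_int
  · decide
  · decide

lemma hvne321 : vC a321 b321 ≠ 0 := by
  intro h
  have h8 := congrFun h 8
  have ha : a321 8 = 22 := by decide
  have hb : b321 8 = 0 := by decide
  rw [vC] at h8
  simp [ha, hb] at h8

/-- The spectral radii of `F_{5,1,0}`, `F_{4,1,1}` and `F_{3,2,1}` are all equal to
`(7 + 3√5)/2`, the larger root of `t² − 7t + 1 = 0`: in each case this value is a
root of the characteristic polynomial and every complex root has modulus at most it. -/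
theorem specRad_F510_F411_F321 :
    (((7 + 3 * Real.sqrt 5) / 2 : ℝ) ^ 2 - 7 * ((7 + 3 * Real.sqrt 5) / 2 : ℝ) + 1 = 0) ∧
    ((cpF 5 1 0).IsRoot (((7 + 3 * Real.sqrt 5) / 2 : ℝ) : ℂ) ∧
      ∀ z : ℂ, (cpF 5 1 0).IsRoot z → ‖z‖ ≤ (7 + 3 * Real.sqrt 5) / 2) ∧
    ((cpF 4 1 1).IsRoot (((7 + 3 * Real.sqrt 5) / 2 : ℝ) : ℂ) ∧
      ∀ z : ℂ, (cpF 4 1 1).IsRoot z → ‖z‖ ≤ (7 + 3 * Real.sqrt 5) / 2) ∧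
    ((cpF 3 2 1).IsRoot (((7 + 3 * Real.sqrt 5) / 2 : ℝ) : ℂ) ∧
      ∀ z : ℂ, (cpF 3 2 1).IsRoot z → ‖z‖ ≤ (7 + 3 * Real.sqrt 5) / 2) := by
  refine ⟨?_, ?_, ?_, ?_⟩
  · have hs : Real.sqrt 5 ^ 2 = 5 := Real.sq_sqrt (by norm_num)
    linear_combination (9/4) * hs
  · exact key _ hannC510 _ hvne510 hev510
  · exact key _ hannC411 _ hvne411 hev411
  · exact key _ hannC321 _ hvne321 hev321
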